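/- In Ch_{\geq 0}(R) (or in Ch(R)), if a chain map j is a cofibration in the mixed model structure and is also a quasi-isomorphism, then j is a chain homotopy equivalence. -/

import Mathlib

/-!
STATEMENT 11: in `Ch_{≥0}(R)`, a map that is a cofibration in the mixed model
structure (a map with the left lifting property against the acyclic fibrations
of the mixed model structure, i.e. against the maps that are degreewise split
epimorphisms in positive degrees and quasi-isomorphisms) and a
quasi-isomorphism is a chain homotopy equivalence.
-/

open CategoryTheory CategoryTheory.Limits

universe u

/-- A chain map is a chain homotopy equivalence if it admits an inverse up to
chain homotopy. -/
def IsChainHomotopyEquiv {R : Type u} [Ring R]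
    {X Y : ChainComplex (ModuleCat.{u} R) ℕ} (f : X ⟶ Y) : Prop :=
  ∃ g : Y ⟶ X, Nonempty (Homotopy (f ≫ g) (𝟙 X)) ∧ Nonempty (Homotopy (g ≫ f) (𝟙 Y))

namespace MixedAux

variable {R : Type u} [Ring R]

/-- Pointwise `d ∘ d = 0`. -/
@[simp] lemma d_d_apply (C : ChainComplex (ModuleCat.{u} R) ℕ) (i j k : ℕ) (x : C.X i) :
    C.d j k (C.d i j x) = 0 := by
  have h := C.d_comp_d i j k
  calc C.d j k (C.d i j x) = (C.d i j ≫ C.d j k) x := rfl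
  _ = (0 : C.X i ⟶ C.X k) x := by rw [h]
  _ = 0 := rfl

/-- Pointwise naturality of a chain map. -/
lemma f_d_apply {A X : ChainComplex (ModuleCat.{u} R) ℕ} (j : A ⟶ X) (i k : ℕ) (x : A.X i) :
    X.d i k (j.f i x) = j.f k (A.d i k x) := by
  have h := j.comm i k
  calc X.d i k (j.f i x) = (j.f i ≫ X.d i k) x := rfl
  _ = (A.d i k ≫ j.f k) x := by rw [h]
  _ = j.f k (A.d i k x) := rfl

variable (A X : ChainComplex (ModuleCat.{u} R) ℕ)

/-- Degreewise modules of the "mapping path space" of `j : A ⟶ X` (in the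
coordinates in which the differential is `(a, h, y) ↦ (da, y, 0)`). -/
abbrev Nob : ℕ → ModuleCat.{u} R
  | 0 => ModuleCat.of R (A.X 0 × X.X 1)
  | (n+1) => ModuleCat.of R (A.X (n+1) × X.X (n+2) × X.X (n+1))

/-- Differential of the mapping path space. -/
def Nd : ∀ n : ℕ, Nob A X (n+1) ⟶ Nob A X n
  | 0 => ModuleCat.ofHom (LinearMap.prod ((A.d 1 0).hom.comp (LinearMap.fst R _ _))
           ((LinearMap.snd R _ _).comp (LinearMap.snd R _ _)))
  | (n+1) => ModuleCat.ofHom (LinearMap.prod ((A.d (n+2) (n+1)).hom.comp (LinearMap.fst R _ _))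
      (LinearMap.prod ((LinearMap.snd R _ _).comp (LinearMap.snd R _ _)) 0))

lemma Nd_sq : ∀ n : ℕ, Nd A X (n+1) ≫ Nd A X n = 0
  | 0 => ModuleCat.hom_ext (LinearMap.ext fun ⟨a, h, y⟩ => Prod.ext (d_d_apply A 2 1 0 a) rfl)
  | (n+1) => ModuleCat.hom_ext (LinearMap.ext fun ⟨a, h, y⟩ =>
      Prod.ext (d_d_apply A (n+3) (n+2) (n+1) a) rfl)

/-- The mapping path space. -/
def MPS : ChainComplex (ModuleCat.{u} R) ℕ := ChainComplex.of (Nob A X) (Nd A X) (Nd_sq A X)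

/-- Components of the inclusion `A ⟶ MPS`. -/
def ιf : ∀ n : ℕ, A.X n ⟶ Nob A X n
  | 0 => ModuleCat.ofHom (LinearMap.prod LinearMap.id 0)
  | (_+1) => ModuleCat.ofHom (LinearMap.prod LinearMap.id 0)

/-- Components of the projection `MPS ⟶ A`. -/
def πf : ∀ n : ℕ, Nob A X n ⟶ A.X n
  | 0 => ModuleCat.ofHom (LinearMap.fst R _ _)
  | (_+1) => ModuleCat.ofHom (LinearMap.fst R _ _)

/-- The inclusion `A ⟶ MPS`. -/
def mpι : A ⟶ MPS A X where
  f := ιf A X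
  comm' := by
    rintro i j (rfl : j + 1 = i)
    rw [show (MPS A X).d (j+1) j = Nd A X j from ChainComplex.of_d _ _ _]
    cases j <;> (ext a; rfl)

/-- The projection `MPS ⟶ A`. -/
def mpπ : MPS A X ⟶ A where
  f := πf A X
  comm' := by
    rintro i j (rfl : j + 1 = i)
    rw [show (MPS A X).d (j+1) j = Nd A X j from ChainComplex.of_d _ _ _]
    cases j <;> (ext x; rfl)

variable {A X} (j : A ⟶ X)

/-- Components of the fibration `MPS ⟶ X`. -/
def pf : ∀ n : ℕ, Nob A X n ⟶ X.X n
  | 0 => ModuleCat.ofHom ((j.f 0).hom.comp (LinearMap.fst R _ _) + (X.d 1 0).hom.comp (LinearMap.snd R _ _))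
  | (n+1) => ModuleCat.ofHom ((j.f (n+1)).hom.comp (LinearMap.fst R _ _)
      + (X.d (n+2) (n+1)).hom.comp ((LinearMap.fst R _ _).comp (LinearMap.snd R _ _))
      + (LinearMap.snd R _ _).comp (LinearMap.snd R _ _))

/-- The fibration `MPS ⟶ X`. -/
def mpp : MPS A X ⟶ X where
  f := pf j
  comm' := by
    rintro i k (rfl : k + 1 = i)
    rw [show (MPS A X).d (k+1) k = Nd A X k from ChainComplex.of_d _ _ _]
    cases k with
    | zero =>
      ext ⟨a, h, y⟩
      show X.d 1 0 (j.f 1 a + X.d 2 1 h + y) = j.f 0 (A.d 1 0 a) + X.d 1 0 y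
      rw [map_add, map_add, d_d_apply, add_zero, f_d_apply]
    | succ n =>
      ext ⟨a, h, y⟩
      show X.d (n+2) (n+1) (j.f (n+2) a + X.d (n+3) (n+2) h + y)
        = j.f (n+1) (A.d (n+2) (n+1) a) + X.d (n+2) (n+1) y + 0
      rw [map_add, map_add, d_d_apply, add_zero, f_d_apply, add_zero]

lemma ι_π : mpι A X ≫ mpπ A X = 𝟙 A := by
  ext n x
  cases n <;> rfl

lemma ι_p : mpι A X ≫ mpp j = j := by
  ext n a
  cases n with
  | zero =>
    show j.f 0 a + X.d 1 0 0 = j.f 0 a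
    rw [map_zero, add_zero]
  | succ n =>
    show j.f (n+1) a + X.d (n+2) (n+1) 0 + 0 = j.f (n+1) a
    rw [map_zero, add_zero, add_zero]

variable (A X)

/-- Components of the contracting homotopy. -/
def homt : ∀ n : ℕ, Nob A X n ⟶ Nob A X (n+1)
  | 0 => ModuleCat.ofHom (LinearMap.prod 0 (LinearMap.prod 0 (-(LinearMap.snd R _ _))))
  | (n+1) => ModuleCat.ofHom (LinearMap.prod 0
      (LinearMap.prod 0 (-((LinearMap.fst R _ _).comp (LinearMap.snd R _ _)))))

/-- The homotopy `mpπ ≫ mpι ≃ 𝟙`. -/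
def mpHomotopy : Homotopy (mpπ A X ≫ mpι A X) (𝟙 (MPS A X)) where
  hom i k := if h : k = i + 1 then homt A X i ≫ eqToHom (congrArg (MPS A X).X h.symm) else 0
  zero i k hk := dif_neg (fun h => hk (by rw [h]; rfl))
  comm i := by
    have hd : ∀ n : ℕ, (MPS A X).d (n+1) n = Nd A X n :=
      fun n => ChainComplex.of_d _ _ _
    rw [Homotopy.prevD_chainComplex, dif_pos rfl]; erw [eqToHom_refl, Category.comp_id]; rw [hd]
    cases i with
    | zero =>
      rw [Homotopy.dNext_zero_chainComplex, zero_add]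
      ext ⟨a, h⟩
      refine Prod.ext ?_ ?_
      · show a = A.d 1 0 0 + a
        rw [map_zero, zero_add]
      · show (0 : X.X 1) = -h + h
        rw [neg_add_cancel]
    | succ n =>
      rw [Homotopy.dNext_succ_chainComplex, hd, dif_pos rfl]; erw [eqToHom_refl, Category.comp_id]
      cases n with
      | zero =>
        ext ⟨a, h, y⟩
        refine Prod.ext ?_ (Prod.ext ?_ ?_)
        · show a = ((0 : A.X 1) + A.d 2 1 0) + a
          rw [map_zero, add_zero, zero_add]
        · show (0 : X.X (0+2)) = ((0 : X.X (0+2)) + -h) + h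
          abel
        · show (0 : X.X (0+1)) = (-y + (0 : X.X (0+1))) + y
          abel
      | succ m =>
        ext ⟨a, h, y⟩
        refine Prod.ext ?_ (Prod.ext ?_ ?_)
        · show a = ((0 : A.X (m+2)) + A.d (m+3) (m+2) 0) + a
          rw [map_zero, add_zero, zero_add]
        · show (0 : X.X (m+1+2)) = ((0 : X.X (m+1+2)) + -h) + h
          abel
        · show (0 : X.X (m+1+1)) = (-y + (0 : X.X (m+1+1))) + y
          abel

/-- The inclusion is a homotopy equivalence. -/
def mpEquiv : HomotopyEquiv A (MPS A X) where
  hom := mpι A X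
  inv := mpπ A X
  homotopyHomInvId := Homotopy.ofEq ι_π
  homotopyInvHomId := mpHomotopy A X

end MixedAux

open MixedAux

/-- In `Ch_{≥0}(R)`, if a chain map `j` is a cofibration in the mixed model
structure (it has the left lifting property with respect to every map that is
a degreewise split epimorphism in positive degrees and a quasi-isomorphism)
and `j` is a quasi-isomorphism, then `j` is a chain homotopy equivalence. -/
theorem mixed_trivial_cofibration_is_chain_homotopy_equivalence
    {R : Type u} [Ring R] {A X : ChainComplex (ModuleCat.{u} R) ℕ} (j : A ⟶ X)
    (hcof : ∀ {E B : ChainComplex (ModuleCat.{u} R) ℕ} (p : E ⟶ B),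
      (∀ n : ℕ, 0 < n → ∃ s : B.X n ⟶ E.X n, s ≫ p.f n = 𝟙 (B.X n)) →
      QuasiIso p → HasLiftingProperty j p)
    (hqis : QuasiIso j) :
    IsChainHomotopyEquiv j := by
  -- the inclusion into the mapping path space is a quasi-isomorphism
  haveI hι : QuasiIso (mpι A X) := by
    have : QuasiIso (mpEquiv A X).hom := inferInstance
    exact this
  -- `mpp j` is a quasi-isomorphism by two-out-of-three
  haveI hcomp : QuasiIso (mpι A X ≫ mpp j) := by rw [ι_p]; exact hqis
  haveI hp : QuasiIso (mpp j) := quasiIso_of_comp_left (mpι A X) (mpp j)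
  -- `mpp j` is degreewise split epi in positive degrees
  have hsplit : ∀ n : ℕ, 0 < n → ∃ s : X.X n ⟶ (MPS A X).X n, s ≫ (mpp j).f n = 𝟙 (X.X n) := by
    rintro (_|n) hn
    · exact absurd hn (lt_irrefl 0)
    · refine ⟨ModuleCat.ofHom (LinearMap.prod 0 (LinearMap.prod 0 LinearMap.id)), ?_⟩
      ext x
      show j.f (n+1) 0 + X.d (n+2) (n+1) 0 + x = x
      rw [map_zero, map_zero, zero_add, zero_add]
  haveI := hcof (mpp j) hsplit hp
  -- lift in the square `mpι = j ≫ l`, `l ≫ mpp j = 𝟙 X`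
  have sq : CommSq (mpι A X) j (mpp j) (𝟙 X) := ⟨by rw [ι_p, Category.comp_id]⟩
  let l : X ⟶ MPS A X := sq.lift
  refine ⟨l ≫ mpπ A X, ⟨Homotopy.ofEq ?_⟩, ⟨?_⟩⟩
  · rw [← Category.assoc, sq.fac_left, ι_π]
  · have e1 : (l ≫ mpπ A X) ≫ j = l ≫ ((mpπ A X ≫ mpι A X) ≫ mpp j) := by
      conv_lhs => rw [← ι_p j]
      simp only [Category.assoc]
    have e2 : l ≫ (𝟙 (MPS A X) ≫ mpp j) = 𝟙 X := by
      rw [Category.id_comp]; exact sq.fac_right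
    exact (Homotopy.ofEq e1).trans
      ((((mpHomotopy A X).compRight (mpp j)).compLeft l).trans (Homotopy.ofEq e2))
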